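/- Let k ≥ 1 and n ≥ 1 be integers and let C be a linear code of length n over R_{k,1}. Then φ_{k1}(C^⊥) = φ_{k1}(C)^⊥, where the dual on the right is taken in F_2^{kn} with the standard dot product. In particular, if C is self-dual over R_{k,1}, then φ_{k1}(C) is a binary self-dual code of length kn. -/

import Mathlib

set_option synthInstance.maxHeartbeats 1000000
set_option maxHeartbeats 1000000

/-- The ring `R_{k,1} = F_2[u]/⟨u^k⟩`. -/
noncomputable abbrev Rk1 (k : ℕ) : Type :=
  Polynomial (ZMod 2) ⧸ (Ideal.span {(Polynomial.X : Polynomial (ZMod 2)) ^ k})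

/-- `u`, the image of `X` in `R_{k,1}`. -/
noncomputable def Rk1.u (k : ℕ) : Rk1 k := Ideal.Quotient.mk _ Polynomial.X

/-- The `t`-th Gray interval (0-indexed): `I_{2s+1} = {s,…,k-1-s}` and
`I_{2s+2} = {s+1,…,k-1-s}`, i.e. `I_{t+1} = {⌈(t+1)/2⌉,…,k-1-⌊t/2⌋}` for `t = 0,…,k-1`. -/
def grayInterval (k : ℕ) (t : Fin k) : Finset (Fin k) :=
  Finset.univ.filter fun i : Fin k => ((t : ℕ) + 1) / 2 ≤ (i : ℕ) ∧ (i : ℕ) ≤ k - 1 - (t : ℕ) / 2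

namespace GrayAux

/-- `Nv k i` is the largest `t` such that `i ∈ I_{t+1}`. -/
def Nv (k i : ℕ) : ℕ := min (2*i) (2*(k-1-i)+1)

lemma mem_grayInterval {k : ℕ} (t i : Fin k) : i ∈ grayInterval k t ↔ (t:ℕ) ≤ Nv k i := by
  simp only [grayInterval, Finset.mem_filter, Finset.mem_univ, true_and, Nv]
  have := t.isLt; have := i.isLt; omega

lemma Nv_lt {k : ℕ} (i : Fin k) : Nv k (i:ℕ) < k := by
  have := i.isLt; simp only [Nv]; omega

lemma Nv_inj {k : ℕ} (i i' : Fin k) (h : Nv k (i:ℕ) = Nv k (i':ℕ)) : i = i' := by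
  have := i.isLt; have := i'.isLt
  apply Fin.ext; simp only [Nv] at h; omega

lemma card_le {k : ℕ} (b : Fin k) :
    (Finset.univ.filter fun t : Fin k => (t:ℕ) ≤ (b:ℕ)).card = (b:ℕ) + 1 := by
  have : (Finset.univ.filter fun t : Fin k => (t:ℕ) ≤ (b:ℕ)) = Finset.Iic b := by
    ext t; simp only [Finset.mem_filter, Finset.mem_univ, true_and, Finset.mem_Iic, Fin.le_def]
  rw [this, Fin.card_Iic]

/-- The key parity computation: the number of Gray intervals containing both `i` and `i'`
is odd iff `i + i' ≤ k - 1`. -/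
lemma parity {k : ℕ} (i i' : Fin k) :
    (∑ t : Fin k, if i ∈ grayInterval k t ∧ i' ∈ grayInterval k t then (1:ZMod 2) else 0)
      = if (i:ℕ) + (i':ℕ) < k then 1 else 0 := by
  have hb : min (Nv k i) (Nv k i') < k := lt_of_le_of_lt (min_le_left _ _) (Nv_lt i)
  set b : Fin k := ⟨min (Nv k i) (Nv k i'), hb⟩ with hbdef
  have h1 : ∀ t : Fin k, (i ∈ grayInterval k t ∧ i' ∈ grayInterval k t) ↔ (t:ℕ) ≤ (b:ℕ) := by
    intro t; rw [mem_grayInterval, mem_grayInterval]; simp [hbdef, le_min_iff]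
  rw [Finset.sum_congr rfl (fun t _ => by rw [if_congr (h1 t) rfl rfl])]
  rw [Finset.sum_boole, card_le b]
  have hpar : ((b:ℕ) + 1) % 2 = (if (i:ℕ) + (i':ℕ) < k then 1 else 0) % 2 := by
    have := i.isLt; have := i'.isLt
    simp only [hbdef, Nv]
    split <;> omega
  calc (((b:ℕ) + 1 : ℕ) : ZMod 2) = ((((b:ℕ) + 1) % 2 : ℕ) : ZMod 2) := by
        rw [ZMod.natCast_mod]
    _ = _ := by rw [hpar]; split <;> simp

lemma u_pow_k (k : ℕ) : Rk1.u k ^ k = 0 := by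
  rw [Rk1.u, ← map_pow, Ideal.Quotient.eq_zero_iff_mem]
  exact Ideal.subset_span rfl

variable {k : ℕ} (B : Module.Basis (Fin k) (ZMod 2) (Rk1 k))

/-- The "sum of all coordinates" functional on `R_{k,1}`. -/
noncomputable def eps : Rk1 k →ₗ[ZMod 2] ZMod 2 :=
  ∑ s : Fin k, (Finsupp.lapply s).comp (B.repr : Rk1 k →ₗ[ZMod 2] (Fin k →₀ ZMod 2))

lemma eps_apply (x : Rk1 k) : eps B x = ∑ s : Fin k, B.repr x s := by
  simp [eps, LinearMap.sum_apply]

variable (hB : ∀ i : Fin k, B i = Rk1.u k ^ (i:ℕ))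

include hB in
lemma eps_u_pow (m : ℕ) : eps B (Rk1.u k ^ m) = if m < k then 1 else 0 := by
  split
  · next h =>
    rw [show Rk1.u k ^ m = B ⟨m, h⟩ from (hB ⟨m, h⟩).symm, eps_apply]
    simp [B.repr_self, Finsupp.single_apply]
  · next h =>
    have h0 : Rk1.u k ^ m = 0 := by
      rw [show m = k + (m - k) by omega, pow_add, u_pow_k, zero_mul]
    rw [h0, map_zero]

include hB in
lemma eps_mul (x y : Rk1 k) :
    eps B (x * y) = ∑ i : Fin k, ∑ i' : Fin k,
      B.repr x i * B.repr y i' * (if (i:ℕ) + (i':ℕ) < k then 1 else 0) := by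
  conv_lhs => rw [← B.sum_repr x, ← B.sum_repr y]
  rw [Finset.sum_mul_sum, map_sum]
  refine Finset.sum_congr rfl fun i _ => ?_
  rw [map_sum]
  refine Finset.sum_congr rfl fun i' _ => ?_
  rw [smul_mul_smul_comm, map_smul, hB, hB, ← pow_add, eps_u_pow B hB, smul_eq_mul]

include hB in
lemma eps_u_mul (s : ℕ) (c : Rk1 k) :
    eps B (Rk1.u k ^ s * c) = ∑ i : Fin k, B.repr c i * (if s + (i:ℕ) < k then 1 else 0) := by
  conv_lhs => rw [← B.sum_repr c]
  rw [Finset.mul_sum, map_sum]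
  refine Finset.sum_congr rfl fun i _ => ?_
  rw [mul_smul_comm, map_smul, hB, ← pow_add, eps_u_pow B hB, smul_eq_mul]

include hB in
lemma eq_zero_of_eps (c : Rk1 k)
    (h : ∀ s : ℕ, s < k → eps B (Rk1.u k ^ s * c) = 0) : c = 0 := by
  have hS : ∀ m : ℕ, m ≤ k →
      (∑ i : Fin k, if (i:ℕ) < m then B.repr c i else 0) = 0 := by
    intro m hm
    rcases Nat.eq_zero_or_pos m with hm0 | hm0
    · subst hm0; simp
    · have hs := h (k - m) (by omega)
      rw [eps_u_mul B hB] at hs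
      refine Eq.trans (Finset.sum_congr rfl fun i _ => ?_) hs
      have := i.isLt
      split_ifs with h1 h2 h2 <;> first | omega | simp
  have hzero : ∀ i : Fin k, B.repr c i = 0 := by
    intro i
    have h1 := hS ((i:ℕ) + 1) i.isLt
    have h2 := hS (i:ℕ) (le_of_lt i.isLt)
    have hsplit : (∑ i' : Fin k, if (i':ℕ) < (i:ℕ) + 1 then B.repr c i' else 0)
        = (∑ i' : Fin k, if (i':ℕ) < (i:ℕ) then B.repr c i' else 0)
          + (∑ i' : Fin k, if i' = i then B.repr c i' else 0) := by
      rw [← Finset.sum_add_distrib]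
      refine Finset.sum_congr rfl fun i' _ => ?_
      have : i' = i ↔ (i':ℕ) = (i:ℕ) := Fin.ext_iff
      split_ifs <;> simp_all <;> omega
    rw [h1, h2, Finset.sum_ite_eq' Finset.univ i (fun i' => B.repr c i'),
      if_pos (Finset.mem_univ i), zero_add] at hsplit
    exact hsplit.symm
  exact B.repr.map_eq_zero_iff.mp (Finsupp.ext fun i => by simp [hzero i])

/-- The Gray transformation on coordinate vectors, as a linear endomorphism. -/
noncomputable def Tl (k : ℕ) : (Fin k → ZMod 2) →ₗ[ZMod 2] (Fin k → ZMod 2) where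
  toFun c t := ∑ i ∈ grayInterval k t, c i
  map_add' x y := by funext t; simp [Finset.sum_add_distrib]
  map_smul' m x := by funext t; simp [Finset.mul_sum]

lemma Tl_surj (k : ℕ) : Function.Surjective (Tl k) := by
  rw [← LinearMap.injective_iff_surjective]
  rw [injective_iff_map_eq_zero]
  intro c hc
  have hG : ∀ t : Fin k,
      (∑ i ∈ Finset.univ.filter (fun i : Fin k => (t:ℕ) ≤ Nv k (i:ℕ)), c i) = 0 := by
    intro t
    have := congrFun hc t
    simp only [Tl, LinearMap.coe_mk, AddHom.coe_mk, Pi.zero_apply] at this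
    rw [← this]
    refine Finset.sum_congr ?_ fun _ _ => rfl
    ext i; simp [mem_grayInterval, Finset.mem_filter]
  have key : ∀ d : ℕ, ∀ i : Fin k, k ≤ Nv k (i:ℕ) + d → c i = 0 := by
    intro d
    induction d with
    | zero => intro i hi; exact absurd hi (by have := Nv_lt i; omega)
    | succ d ih =>
      intro i hi
      by_cases hcase : k ≤ Nv k (i:ℕ) + d
      · exact ih i hcase
      · have h0 := hG ⟨Nv k (i:ℕ), Nv_lt i⟩
        rw [Finset.sum_eq_single i (fun b hb hbne => ?_) (fun habs => ?_)] at h0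
        · exact h0
        · simp only [Finset.mem_filter, Finset.mem_univ, true_and] at hb
          have : Nv k (b:ℕ) ≠ Nv k (i:ℕ) := fun he => hbne (Nv_inj b i he)
          exact ih b (by omega)
        · exact absurd (Finset.mem_filter.mpr
            ⟨Finset.mem_univ i, le_refl (Nv k (i:ℕ))⟩) habs
  funext i
  exact key k i (by omega)

end GrayAux

/-- The Gray map `φ_{k1}` preserves duality: `φ_{k1}(C^⊥) = φ_{k1}(C)^⊥`, so in particular
the Gray image of a self-dual code of length `n` over `R_{k,1}` is a binary self-dual code
of length `kn`.  Here the coefficients `ā_i ∈ F_2^n` of `ā ∈ R_{k,1}^n` are taken with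
respect to the basis `1, u, …, u^{k-1}`, and the blocks of `φ_{k1}` are indexed by
`Fin k`. -/
theorem grayMap_dual_Rk1 (k n : ℕ) (hk : 1 ≤ k) (hn : 1 ≤ n)
    (B : Module.Basis (Fin k) (ZMod 2) (Rk1 k)) (hB : ∀ i : Fin k, B i = Rk1.u k ^ (i : ℕ))
    (φ : (Fin n → Rk1 k) → (Fin k × Fin n → ZMod 2))
    (hφ : ∀ a : Fin n → Rk1 k, ∀ p : Fin k × Fin n,
      φ a p = ∑ i ∈ grayInterval k p.1, B.repr (a p.2) i)
    (C : Submodule (Rk1 k) (Fin n → Rk1 k)) :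
    φ '' {b : Fin n → Rk1 k | ∀ a ∈ C, ∑ j, a j * b j = 0} =
      {w : Fin k × Fin n → ZMod 2 | ∀ x ∈ φ '' (C : Set (Fin n → Rk1 k)), ∑ p, x p * w p = 0} ∧
    ((C : Set (Fin n → Rk1 k)) = {b : Fin n → Rk1 k | ∀ a ∈ C, ∑ j, a j * b j = 0} →
      φ '' (C : Set (Fin n → Rk1 k)) =
        {w : Fin k × Fin n → ZMod 2 |
          ∀ x ∈ φ '' (C : Set (Fin n → Rk1 k)), ∑ p, x p * w p = 0}) := by
  classical
  -- The key identity: the binary dot product of Gray images equals `eps` of the inner product.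
  have KI : ∀ a b : Fin n → Rk1 k, (∑ p : Fin k × Fin n, φ a p * φ b p)
      = GrayAux.eps B (∑ j, a j * b j) := by
    intro a b
    rw [map_sum, Fintype.sum_prod_type, Finset.sum_comm]
    refine Finset.sum_congr rfl fun j _ => ?_
    rw [GrayAux.eps_mul B hB]
    calc ∑ t : Fin k, φ a (t, j) * φ b (t, j)
        = ∑ t : Fin k, (∑ i : Fin k, if i ∈ grayInterval k t then B.repr (a j) i else 0)
            * (∑ i' : Fin k, if i' ∈ grayInterval k t then B.repr (b j) i' else 0) := by
          refine Finset.sum_congr rfl fun t _ => ?_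
          rw [hφ a (t, j), hφ b (t, j)]
          congr 1 <;>
            rw [Finset.sum_ite_mem, Finset.univ_inter]
      _ = ∑ t : Fin k, ∑ i : Fin k, ∑ i' : Fin k,
            (if i ∈ grayInterval k t then B.repr (a j) i else 0)
            * (if i' ∈ grayInterval k t then B.repr (b j) i' else 0) := by
          refine Finset.sum_congr rfl fun t _ => ?_
          rw [Finset.sum_mul_sum]
      _ = ∑ i : Fin k, ∑ i' : Fin k, ∑ t : Fin k,
            (if i ∈ grayInterval k t then B.repr (a j) i else 0)
            * (if i' ∈ grayInterval k t then B.repr (b j) i' else 0) := by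
          rw [Finset.sum_comm]
          exact Finset.sum_congr rfl fun i _ => Finset.sum_comm
      _ = ∑ i : Fin k, ∑ i' : Fin k, B.repr (a j) i * B.repr (b j) i'
            * (∑ t : Fin k, if i ∈ grayInterval k t ∧ i' ∈ grayInterval k t
                then (1:ZMod 2) else 0) := by
          refine Finset.sum_congr rfl fun i _ => Finset.sum_congr rfl fun i' _ => ?_
          rw [Finset.mul_sum]
          refine Finset.sum_congr rfl fun t _ => ?_
          rcases em (i ∈ grayInterval k t) with h1 | h1 <;>
            rcases em (i' ∈ grayInterval k t) with h2 | h2 <;>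
            simp [h1, h2]
      _ = _ := by
          refine Finset.sum_congr rfl fun i _ => Finset.sum_congr rfl fun i' _ => ?_
          rw [GrayAux.parity i i']
  -- `φ` is surjective.
  have hsurj : ∀ w : Fin k × Fin n → ZMod 2, ∃ b, φ b = w := by
    intro w
    choose g hg using fun j : Fin n => GrayAux.Tl_surj k (fun t => w (t, j))
    refine ⟨fun j => B.equivFun.symm (g j), funext fun p => ?_⟩
    obtain ⟨t, j⟩ := p
    rw [hφ]
    have hrepr : ∀ i : Fin k, B.repr (B.equivFun.symm (g j)) i = g j i := by
      intro i
      rw [← B.equivFun_apply, LinearEquiv.apply_symm_apply]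
    rw [Finset.sum_congr rfl fun i _ => hrepr i]
    have := congrFun (hg j) t
    simpa [GrayAux.Tl] using this
  have main : φ '' {b : Fin n → Rk1 k | ∀ a ∈ C, ∑ j, a j * b j = 0} =
      {w : Fin k × Fin n → ZMod 2 |
        ∀ x ∈ φ '' (C : Set (Fin n → Rk1 k)), ∑ p, x p * w p = 0} := by
    ext w
    constructor
    · rintro ⟨b, hb, rfl⟩ x ⟨a, ha, rfl⟩
      rw [KI a b, hb a ha, map_zero]
    · intro hw
      obtain ⟨b, rfl⟩ := hsurj w
      refine ⟨b, fun a ha => ?_, rfl⟩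
      refine GrayAux.eq_zero_of_eps B hB _ fun s hs => ?_
      have hmem : Rk1.u k ^ s • a ∈ C := C.smul_mem _ ha
      have h0 := hw (φ (Rk1.u k ^ s • a)) (Set.mem_image_of_mem φ hmem)
      rw [KI] at h0
      refine Eq.trans ?_ h0
      congr 1
      rw [Finset.mul_sum]
      refine Finset.sum_congr rfl fun j _ => ?_
      rw [Pi.smul_apply, smul_eq_mul, mul_assoc]
  exact ⟨main, fun hC => by rw [← main]; exact congrArg (Set.image φ) hC⟩
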